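/- Let H be a complex Hilbert space, ψ ∈ H a unit vector, and A₀, A₁, B₀, B₁ : H →L[ℂ] H bounded self-adjoint operators satisfying Aᵢ ∘ Aᵢ = 1 and Bⱼ ∘ Bⱼ = 1, with Aᵢ ∘ Bⱼ = Bⱼ ∘ Aᵢ for all i, j ∈ {0,1}. Let d = re⟪ψ, (A₀A₁ + A₁A₀)ψ⟫ / 2. Then |re⟪ψ, (A₀B₀ + A₁B₀ + A₀B₁ − A₁B₁)ψ⟫| ≤ √(2(1 + d)) + √(2(1 − d)). -/

import Mathlib

private lemma sa_move {H : Type*} [NormedAddCommGroup H] [InnerProductSpace ℂ H]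
    [CompleteSpace H] (T : H →L[ℂ] H) (hT : IsSelfAdjoint T) (x y : H) :
    (inner ℂ (T x) y : ℂ) = inner ℂ x (T y) := by
  rw [← ContinuousLinearMap.adjoint_inner_left, hT.adjoint_eq]

private lemma norm_sq_apply {H : Type*} [NormedAddCommGroup H] [InnerProductSpace ℂ H]
    [CompleteSpace H] (T : H →L[ℂ] H) (hT : IsSelfAdjoint T) (x : H) :
    ‖T x‖ ^ 2 = (inner ℂ x ((T * T) x) : ℂ).re := by
  have h : (inner ℂ (T x) (T x) : ℂ) = inner ℂ x ((T * T) x) := by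
    rw [sa_move T hT]; rfl
  have h2 : (inner ℂ (T x) (T x) : ℂ) = (‖T x‖ : ℂ) ^ 2 := inner_self_eq_norm_sq_to_K _
  rw [← h, h2, ← Complex.ofReal_pow, Complex.ofReal_re]

/-- In the quantum Bell-CHSH scenario, with
`d = ⟨{A₀, A₁}⟩/2`, the Bell-CHSH parameter is bounded by
`√(2(1 + d)) + √(2(1 - d))`. -/
theorem chsh_anticommutator_bound
    {H : Type*} [NormedAddCommGroup H] [InnerProductSpace ℂ H] [CompleteSpace H]
    (ψ : H) (hψ : ‖ψ‖ = 1)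
    (A₀ A₁ B₀ B₁ : H →L[ℂ] H)
    (hA₀ : IsSelfAdjoint A₀) (hA₁ : IsSelfAdjoint A₁)
    (hB₀ : IsSelfAdjoint B₀) (hB₁ : IsSelfAdjoint B₁)
    (hA₀2 : A₀ * A₀ = 1) (hA₁2 : A₁ * A₁ = 1)
    (hB₀2 : B₀ * B₀ = 1) (hB₁2 : B₁ * B₁ = 1)
    (hcomm : ∀ i ∈ [A₀, A₁], ∀ j ∈ [B₀, B₁], i * j = j * i)
    (d : ℝ) (hd : d = (inner ℂ ψ ((A₀ * A₁ + A₁ * A₀) ψ) : ℂ).re / 2) :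
    |(inner ℂ ψ ((A₀ * B₀ + A₁ * B₀ + A₀ * B₁ - A₁ * B₁) ψ) : ℂ).re| ≤
      Real.sqrt (2 * (1 + d)) + Real.sqrt (2 * (1 - d)) := by
  set C := A₀ + A₁ with hC
  set D := A₀ - A₁ with hD
  have hCsa : IsSelfAdjoint C := hA₀.add hA₁
  have hDsa : IsSelfAdjoint D := hA₀.sub hA₁
  have hip : (inner ℂ ψ ψ : ℂ) = 1 := by
    rw [inner_self_eq_norm_sq_to_K, hψ]; norm_num
  -- norms of B₀ψ, B₁ψ
  have hB0n : ‖B₀ ψ‖ = 1 := by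
    have := norm_sq_apply B₀ hB₀ ψ
    rw [hB₀2] at this
    rw [ContinuousLinearMap.one_apply, hip, Complex.one_re, sq_eq_one_iff] at this
    rcases this with h | h
    · exact h
    · nlinarith [norm_nonneg (B₀ ψ)]
  have hB1n : ‖B₁ ψ‖ = 1 := by
    have := norm_sq_apply B₁ hB₁ ψ
    rw [hB₁2] at this
    rw [ContinuousLinearMap.one_apply, hip, Complex.one_re, sq_eq_one_iff] at this
    rcases this with h | h
    · exact h
    · nlinarith [norm_nonneg (B₁ ψ)]
  -- norm of Cψ and Dψ
  have hCC : C * C = 1 + 1 + (A₀ * A₁ + A₁ * A₀) := by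
    rw [hC]; rw [add_mul, mul_add, mul_add, hA₀2, hA₁2]; abel
  have hDD : D * D = 1 + 1 - (A₀ * A₁ + A₁ * A₀) := by
    rw [hD]; rw [sub_mul, mul_sub, mul_sub, hA₀2, hA₁2]; abel
  have hCn : ‖C ψ‖ ^ 2 = 2 * (1 + d) := by
    rw [norm_sq_apply C hCsa ψ, hCC, hd]
    simp only [ContinuousLinearMap.add_apply, ContinuousLinearMap.one_apply,
      inner_add_right, hip]
    simp
    ring
  have hDn : ‖D ψ‖ ^ 2 = 2 * (1 - d) := by
    rw [norm_sq_apply D hDsa ψ, hDD, hd]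
    simp only [ContinuousLinearMap.sub_apply, ContinuousLinearMap.add_apply,
      ContinuousLinearMap.one_apply, inner_sub_right, inner_add_right, hip]
    simp
    ring
  have hCn' : ‖C ψ‖ = Real.sqrt (2 * (1 + d)) := by
    rw [← hCn, Real.sqrt_sq (norm_nonneg _)]
  have hDn' : ‖D ψ‖ = Real.sqrt (2 * (1 - d)) := by
    rw [← hDn, Real.sqrt_sq (norm_nonneg _)]
  -- split the CHSH operator
  have hsplit : A₀ * B₀ + A₁ * B₀ + A₀ * B₁ - A₁ * B₁ = C * B₀ + D * B₁ := by
    rw [hC, hD, add_mul, sub_mul]; abel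
  rw [hsplit]
  have h1 : (inner ℂ ψ ((C * B₀ + D * B₁) ψ) : ℂ)
      = inner ℂ (C ψ) (B₀ ψ) + inner ℂ (D ψ) (B₁ ψ) := by
    rw [sa_move C hCsa, sa_move D hDsa]
    simp [inner_add_right]
  rw [h1]
  have key : ∀ (x y : H), |(inner ℂ x y : ℂ).re| ≤ ‖x‖ * ‖y‖ := by
    intro x y
    calc |(inner ℂ x y : ℂ).re| ≤ ‖(inner ℂ x y : ℂ)‖ := Complex.abs_re_le_norm _
      _ = ‖(inner ℂ x y : ℂ)‖ := rfl
      _ ≤ ‖x‖ * ‖y‖ := norm_inner_le_norm x y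
  calc |((inner ℂ (C ψ) (B₀ ψ) : ℂ) + inner ℂ (D ψ) (B₁ ψ)).re|
      ≤ |(inner ℂ (C ψ) (B₀ ψ) : ℂ).re| + |(inner ℂ (D ψ) (B₁ ψ) : ℂ).re| := by
        rw [Complex.add_re]; exact abs_add_le _ _
    _ ≤ ‖C ψ‖ * ‖B₀ ψ‖ + ‖D ψ‖ * ‖B₁ ψ‖ := add_le_add (key _ _) (key _ _)
    _ = Real.sqrt (2 * (1 + d)) + Real.sqrt (2 * (1 - d)) := by
        rw [hB0n, hB1n, hCn', hDn']; ring
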